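/- Let X be a Banach space and S = (X_k)_{k≥1} closed subspaces. The following are equivalent: (1) S is a representing system of subspaces in X; (2) there exist α ∈ (0,1), B > 0 with Θ_S(x, α‖x‖) ≤ B‖x‖ for all x; (3) Θ*_S(x) < ∞ for all x ∈ X; (4) sup{Θ*_S(x) : ‖x‖ ≤ 1} < ∞. -/

import Mathlib

open Filter Finset
open scoped ENNReal

variable {E : Type*} [NormedAddCommGroup E] [NormedSpace ℝ E]

/-- For a finite tuple `P = (x_0, …, x_{n-1})` with `x_k ∈ X_k`,
`Θ_S(P) = max_k ‖x_0 + ⋯ + x_k‖` (as an extended nonnegative real). -/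
noncomputable def ThetaP (n : ℕ) (f : ℕ → E) : ℝ≥0∞ :=
  (Finset.range n).sup fun k => ENNReal.ofReal ‖∑ j ∈ Finset.range (k + 1), f j‖

/-- `Θ_S(x, ε) = inf {Θ_S(P) : ‖Σ(P) − x‖ ≤ ε}` (infimum over the empty set is `∞`). -/
noncomputable def Theta (X : ℕ → Submodule ℝ E) (x : E) (ε : ℝ) : ℝ≥0∞ :=
  ⨅ p : {p : ℕ × (ℕ → E) // (∀ k < p.1, p.2 k ∈ X k) ∧
      ‖(∑ j ∈ Finset.range p.1, p.2 j) - x‖ ≤ ε}, ThetaP p.1.1 p.1.2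

/-- `Θ*_S(x) = sup_{ε > 0} Θ_S(x, ε) = lim_{ε → 0+} Θ_S(x, ε)`. -/
noncomputable def ThetaStar (X : ℕ → Submodule ℝ E) (x : E) : ℝ≥0∞ :=
  ⨆ ε : {ε : ℝ // 0 < ε}, Theta X x ε

set_option linter.unusedSectionVars false


lemma pad_sum (n : ℕ) (f : ℕ → E) (j : ℕ) :
    (∑ i ∈ Finset.range j, (if i < n then f i else 0)) = ∑ i ∈ Finset.range (min j n), f i := by
  rw [← Finset.sum_filter]
  congr 1
  ext i; simp [Nat.lt_min]

lemma theta_le_theta {X : ℕ → Submodule ℝ E} {x y : E} {ε ε' : ℝ}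
    (h : ∀ s : E, ‖s - x‖ ≤ ε → ‖s - y‖ ≤ ε') : Theta X y ε' ≤ Theta X x ε :=
  le_iInf fun p => iInf_le_of_le ⟨p.1, p.2.1, h _ p.2.2⟩ le_rfl

lemma theta_antitone {X : ℕ → Submodule ℝ E} {x : E} {ε ε' : ℝ} (h : ε ≤ ε') :
    Theta X x ε' ≤ Theta X x ε :=
  theta_le_theta fun _ hs => hs.trans h

lemma theta_le_thetaStar {X : ℕ → Submodule ℝ E} {x : E} {ε : ℝ} (h : 0 < ε) :
    Theta X x ε ≤ ThetaStar X x :=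
  le_iSup (fun ε : {ε : ℝ // 0 < ε} => Theta X x ε) ⟨ε, h⟩

lemma le_thetaP {n : ℕ} {f : ℕ → E} {k : ℕ} (hk : k < n) :
    ENNReal.ofReal ‖∑ j ∈ Finset.range (k + 1), f j‖ ≤ ThetaP n f :=
  Finset.le_sup (f := fun k => ENNReal.ofReal ‖∑ j ∈ Finset.range (k + 1), f j‖)
    (Finset.mem_range.mpr hk)

lemma thetaP_le_of_pad {n N : ℕ} (f : ℕ → E) (hn : n ≤ N) :
    ThetaP N (fun k => if k < n then f k else 0) ≤ ThetaP n f := by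
  apply Finset.sup_le
  intro k _
  rw [pad_sum]
  rcases Nat.eq_zero_or_pos (min (k+1) n) with h | h
  · simp [h]
  · obtain ⟨m, hm⟩ : ∃ m, min (k+1) n = m + 1 := ⟨min (k+1) n - 1, by omega⟩
    rw [hm]
    exact le_thetaP (by omega)

lemma thetaP_add_le (N : ℕ) (f g : ℕ → E) :
    ThetaP N (f + g) ≤ ThetaP N f + ThetaP N g := by
  apply Finset.sup_le
  intro k hk
  rw [Finset.mem_range] at hk
  calc ENNReal.ofReal ‖∑ j ∈ Finset.range (k+1), (f + g) j‖
      ≤ ENNReal.ofReal (‖∑ j ∈ Finset.range (k+1), f j‖ + ‖∑ j ∈ Finset.range (k+1), g j‖) := by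
        apply ENNReal.ofReal_le_ofReal
        rw [show (∑ j ∈ Finset.range (k+1), (f + g) j) = (∑ j ∈ Finset.range (k+1), f j) + ∑ j ∈ Finset.range (k+1), g j by simp [Finset.sum_add_distrib]]
        exact norm_add_le _ _
    _ ≤ ThetaP N f + ThetaP N g := by
        rw [ENNReal.ofReal_add (norm_nonneg _) (norm_nonneg _)]
        exact add_le_add (le_thetaP hk) (le_thetaP hk)

lemma theta_add_le (X : ℕ → Submodule ℝ E) (x y : E) {ε₁ ε₂ : ℝ} :
    Theta X (x + y) (ε₁ + ε₂) ≤ Theta X x ε₁ + Theta X y ε₂ := by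
  simp only [Theta]
  rw [ENNReal.iInf_add]
  refine le_iInf fun p => ?_
  rw [ENNReal.add_iInf]
  refine le_iInf fun q => ?_
  set N := max p.1.1 q.1.1 with hN
  set f' : ℕ → E := fun k => if k < p.1.1 then p.1.2 k else 0 with hf'
  set g' : ℕ → E := fun k => if k < q.1.1 then q.1.2 k else 0 with hg'
  have hmem : ∀ k < N, (f' + g') k ∈ X k := by
    intro k _
    apply Submodule.add_mem
    · simp only [hf']
      split
      · exact p.2.1 _ ‹_›
      · exact Submodule.zero_mem _
    · simp only [hg']
      split
      · exact q.2.1 _ ‹_›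
      · exact Submodule.zero_mem _
  have hsum : ‖(∑ j ∈ Finset.range N, (f' + g') j) - (x + y)‖ ≤ ε₁ + ε₂ := by
    have hfs : ∑ j ∈ Finset.range N, f' j = ∑ j ∈ Finset.range p.1.1, p.1.2 j := by
      rw [hf', pad_sum, min_eq_right (le_max_left _ _)]
    have hgs : ∑ j ∈ Finset.range N, g' j = ∑ j ∈ Finset.range q.1.1, q.1.2 j := by
      rw [hg', pad_sum, min_eq_right (le_max_right _ _)]
    have : (∑ j ∈ Finset.range N, (f' + g') j)
        = (∑ j ∈ Finset.range p.1.1, p.1.2 j) + ∑ j ∈ Finset.range q.1.1, q.1.2 j := by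
      rw [← hfs, ← hgs, ← Finset.sum_add_distrib]; rfl
    rw [this, show (∑ j ∈ Finset.range p.1.1, p.1.2 j) + (∑ j ∈ Finset.range q.1.1, q.1.2 j) - (x + y)
        = ((∑ j ∈ Finset.range p.1.1, p.1.2 j) - x) + ((∑ j ∈ Finset.range q.1.1, q.1.2 j) - y) by abel]
    exact (norm_add_le _ _).trans (add_le_add p.2.2 q.2.2)
  refine iInf_le_of_le ⟨(N, f' + g'), hmem, hsum⟩ ?_
  calc ThetaP N (f' + g') ≤ ThetaP N f' + ThetaP N g' := thetaP_add_le _ _ _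
    _ ≤ ThetaP p.1.1 p.1.2 + ThetaP q.1.1 q.1.2 :=
        add_le_add (thetaP_le_of_pad _ (le_max_left _ _)) (thetaP_le_of_pad _ (le_max_right _ _))

lemma thetaStar_add_le (X : ℕ → Submodule ℝ E) (x y : E) :
    ThetaStar X (x + y) ≤ ThetaStar X x + ThetaStar X y := by
  refine iSup_le fun ε => ?_
  have h2 : (0:ℝ) < ε.1 / 2 := half_pos ε.2
  calc Theta X (x + y) ε.1 = Theta X (x + y) (ε.1/2 + ε.1/2) := by ring_nf
    _ ≤ Theta X x (ε.1/2) + Theta X y (ε.1/2) := theta_add_le _ _ _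
    _ ≤ ThetaStar X x + ThetaStar X y :=
        add_le_add (theta_le_thetaStar h2) (theta_le_thetaStar h2)

lemma theta_smul_le (X : ℕ → Submodule ℝ E) (u : E) {c ε : ℝ} (hc : 0 < c) :
    Theta X (c • u) (c * ε) ≤ ENNReal.ofReal c * Theta X u ε := by
  rcases isEmpty_or_nonempty {p : ℕ × (ℕ → E) // (∀ k < p.1, p.2 k ∈ X k) ∧
      ‖(∑ j ∈ Finset.range p.1, p.2 j) - u‖ ≤ ε} with he | hne
  · refine le_trans le_top (le_of_eq ?_)
    rw [show Theta X u ε = ⊤ from iInf_of_empty _,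
      ENNReal.mul_top (by simp [ENNReal.ofReal_eq_zero, not_le, hc])]
  simp only [Theta]
  rw [ENNReal.mul_iInf (by simp [ENNReal.ofReal_ne_top])]
  refine le_iInf fun p => ?_
  have hmem : ∀ k < p.1.1, (c • p.1.2) k ∈ X k := fun k hk =>
    Submodule.smul_mem _ _ (p.2.1 k hk)
  have hsum : ‖(∑ j ∈ Finset.range p.1.1, (c • p.1.2) j) - c • u‖ ≤ c * ε := by
    rw [show (∑ j ∈ Finset.range p.1.1, (c • p.1.2) j) = c • ∑ j ∈ Finset.range p.1.1, p.1.2 j by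
      rw [Finset.smul_sum]; rfl, ← smul_sub, norm_smul, Real.norm_eq_abs, abs_of_pos hc]
    exact mul_le_mul_of_nonneg_left p.2.2 hc.le
  refine iInf_le_of_le ⟨(p.1.1, c • p.1.2), hmem, hsum⟩ ?_
  apply Finset.sup_le
  intro k hk
  rw [Finset.mem_range] at hk
  calc ENNReal.ofReal ‖∑ j ∈ Finset.range (k+1), (c • p.1.2) j‖
      = ENNReal.ofReal c * ENNReal.ofReal ‖∑ j ∈ Finset.range (k+1), p.1.2 j‖ := by
        rw [show (∑ j ∈ Finset.range (k+1), (c • p.1.2) j) = c • ∑ j ∈ Finset.range (k+1), p.1.2 j by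
          rw [Finset.smul_sum]; rfl, norm_smul, Real.norm_eq_abs, abs_of_pos hc,
          ENNReal.ofReal_mul hc.le]
    _ ≤ ENNReal.ofReal c * ThetaP p.1.1 p.1.2 :=
        mul_le_mul_right (le_thetaP hk) _

lemma thetaStar_smul_le (X : ℕ → Submodule ℝ E) (u : E) {c : ℝ} (hc : 0 < c) :
    ThetaStar X (c • u) ≤ ENNReal.ofReal c * ThetaStar X u := by
  refine iSup_le fun ε => ?_
  have h : (0:ℝ) < ε.1 / c := div_pos ε.2 hc
  calc Theta X (c • u) ε.1 = Theta X (c • u) (c * (ε.1 / c)) := by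
        rw [mul_div_cancel₀ _ hc.ne']
    _ ≤ ENNReal.ofReal c * Theta X u (ε.1 / c) := theta_smul_le _ _ hc
    _ ≤ ENNReal.ofReal c * ThetaStar X u := mul_le_mul_right (theta_le_thetaStar h) _

/-- `S = (X_k)` is a representing system of subspaces. -/
def IsRSS (X : ℕ → Submodule ℝ E) : Prop :=
  ∀ x : E, ∃ f : ℕ → E, (∀ k, f k ∈ X k) ∧
    Tendsto (fun n => ∑ k ∈ Finset.range n, f k) atTop (nhds x)


lemma one_to_three {X : ℕ → Submodule ℝ E} (h1 : IsRSS X) (x : E) : ThetaStar X x ≠ ⊤ := by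
  obtain ⟨f, hmem, htend⟩ := h1 x
  obtain ⟨R, hR⟩ := isBounded_iff_forall_norm_le.mp htend.cauchySeq.isBounded_range
  refine ne_top_of_le_ne_top (ENNReal.ofReal_ne_top (r := R)) (iSup_le fun ε => ?_)
  obtain ⟨n, hn⟩ := Metric.tendsto_atTop.mp htend ε.1 ε.2
  have hdist := hn n le_rfl
  rw [dist_eq_norm] at hdist
  refine iInf_le_of_le ⟨(n, f), fun k _ => hmem k, hdist.le⟩ ?_
  exact Finset.sup_le fun k _ => ENNReal.ofReal_le_ofReal (hR _ (Set.mem_range_self (k+1)))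

lemma three_to_four {X : ℕ → Submodule ℝ E} [CompleteSpace E]
    (h3 : ∀ x : E, ThetaStar X x ≠ ⊤) :
    (⨆ x : {x : E // ‖x‖ ≤ 1}, ThetaStar X x) ≠ ⊤ := by
  set A : ℕ → Set E := fun n => {x | ThetaStar X x ≤ (n : ℝ≥0∞)} with hA
  have hclosed : ∀ n, IsClosed (A n) := by
    intro n
    apply isClosed_of_closure_subset
    intro x hx
    show ThetaStar X x ≤ (n : ℝ≥0∞)
    refine iSup_le fun ε => ?_
    obtain ⟨y, hyA, hy⟩ := Metric.mem_closure_iff.mp hx (ε.1/2) (half_pos ε.2)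
    rw [dist_eq_norm] at hy
    calc Theta X x ε.1 ≤ Theta X y (ε.1/2) := by
          apply theta_le_theta
          intro s hs
          calc ‖s - x‖ ≤ ‖s - y‖ + ‖y - x‖ := norm_sub_le_norm_sub_add_norm_sub _ _ _
            _ ≤ ε.1/2 + ε.1/2 := add_le_add hs (by rw [norm_sub_rev]; exact hy.le)
            _ = ε.1 := by ring
      _ ≤ ThetaStar X y := theta_le_thetaStar (half_pos ε.2)
      _ ≤ (n : ℝ≥0∞) := hyA
  have hcover : ⋃ n, A n = Set.univ := by
    ext z
    simp only [Set.mem_iUnion, Set.mem_univ, iff_true]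
    obtain ⟨n, hn⟩ := ENNReal.exists_nat_gt (h3 z)
    exact ⟨n, hn.le⟩
  obtain ⟨n₀, x₀, hx₀⟩ : ∃ n₀, (interior (A n₀)).Nonempty :=
    nonempty_interior_of_iUnion_of_closed hclosed hcover
  obtain ⟨r, hr, hball⟩ := Metric.isOpen_iff.mp isOpen_interior x₀ hx₀
  have hball' : Metric.ball x₀ r ⊆ A n₀ := hball.trans interior_subset
  set K : ℝ≥0∞ := ENNReal.ofReal (2/r) * ((n₀ : ℝ≥0∞) + ThetaStar X (-x₀)) with hK
  have hKne : K ≠ ⊤ :=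
    ENNReal.mul_ne_top ENNReal.ofReal_ne_top
      (ENNReal.add_ne_top.mpr ⟨ENNReal.natCast_ne_top _, h3 _⟩)
  refine ne_top_of_le_ne_top hKne (iSup_le fun y => ?_)
  have hz : x₀ + (r/2) • y.1 ∈ Metric.ball x₀ r := by
    rw [Metric.mem_ball, dist_eq_norm]
    have : x₀ + (r/2) • y.1 - x₀ = (r/2) • y.1 := by abel
    rw [this, norm_smul, Real.norm_eq_abs, abs_of_pos (half_pos hr)]
    calc r/2 * ‖y.1‖ ≤ r/2 * 1 := mul_le_mul_of_nonneg_left y.2 (half_pos hr).le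
      _ < r := by linarith
  have h1 : ThetaStar X (x₀ + (r/2) • y.1) ≤ (n₀ : ℝ≥0∞) := hball' hz
  have hrep : y.1 = (2/r) • ((x₀ + (r/2) • y.1) + (-x₀)) := by
    have : (x₀ + (r/2) • y.1) + (-x₀) = (r/2) • y.1 := by abel
    rw [this, smul_smul]
    rw [show (2/r) * (r/2) = 1 by field_simp]
    simp
  calc ThetaStar X y.1 = ThetaStar X ((2/r) • ((x₀ + (r/2) • y.1) + (-x₀))) := by rw [← hrep]
    _ ≤ ENNReal.ofReal (2/r) * ThetaStar X ((x₀ + (r/2) • y.1) + (-x₀)) :=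
        thetaStar_smul_le _ _ (by positivity)
    _ ≤ ENNReal.ofReal (2/r) * (ThetaStar X (x₀ + (r/2) • y.1) + ThetaStar X (-x₀)) :=
        mul_le_mul_right (thetaStar_add_le _ _ _) _
    _ ≤ K := mul_le_mul_right (add_le_add_left h1 _) _

lemma four_to_two {X : ℕ → Submodule ℝ E}
    (h4 : (⨆ x : {x : E // ‖x‖ ≤ 1}, ThetaStar X x) ≠ ⊤) :
    ∃ α B : ℝ, α ∈ Set.Ioo (0:ℝ) 1 ∧ 0 < B ∧
      ∀ x : E, Theta X x (α * ‖x‖) ≤ ENNReal.ofReal (B * ‖x‖) := by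
  set M := ⨆ x : {x : E // ‖x‖ ≤ 1}, ThetaStar X x with hM
  refine ⟨1/2, M.toReal + 1, ⟨by norm_num, by norm_num⟩, by positivity, fun x => ?_⟩
  set B := M.toReal + 1 with hB
  have hMB : M ≤ ENNReal.ofReal B := by
    rw [← ENNReal.ofReal_toReal h4]
    exact ENNReal.ofReal_le_ofReal (by simp [hB])
  rcases eq_or_ne x 0 with rfl | hx
  · refine le_trans (iInf_le _ ⟨(0, fun _ => 0), fun k hk => absurd hk (Nat.not_lt_zero k),
      by simp⟩) ?_
    simp [ThetaP]
  · have hx0 : (0:ℝ) < ‖x‖ := norm_pos_iff.mpr hx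
    set u := ‖x‖⁻¹ • x with hu
    have hxu : ‖x‖ • u = x := smul_inv_smul₀ hx0.ne' x
    have hun : ‖u‖ ≤ 1 := by
      rw [hu, norm_smul, Real.norm_eq_abs, abs_of_pos (inv_pos.mpr hx0), inv_mul_cancel₀ hx0.ne']
    calc Theta X x (1/2 * ‖x‖) = Theta X (‖x‖ • u) (‖x‖ * (1/2)) := by
          rw [hxu, mul_comm]
      _ ≤ ENNReal.ofReal ‖x‖ * Theta X u (1/2) := theta_smul_le _ _ hx0
      _ ≤ ENNReal.ofReal ‖x‖ * ThetaStar X u :=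
          mul_le_mul_right (theta_le_thetaStar (by norm_num)) _
      _ ≤ ENNReal.ofReal ‖x‖ * M :=
          mul_le_mul_right (le_iSup (fun z : {z : E // ‖z‖ ≤ 1} => ThetaStar X z.1) ⟨u, hun⟩) _
      _ ≤ ENNReal.ofReal ‖x‖ * ENNReal.ofReal B := mul_le_mul_right hMB _
      _ = ENNReal.ofReal (B * ‖x‖) := by
          rw [← ENNReal.ofReal_mul (norm_nonneg x), mul_comm]

lemma rss_step {X : ℕ → Submodule ℝ E} {α B : ℝ} (hB : 0 < B)
    (h2 : ∀ x : E, Theta X x (α * ‖x‖) ≤ ENNReal.ofReal (B * ‖x‖)) (x : E) {δ : ℝ}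
    (hδ : 0 < δ) :
    ∃ (n : ℕ) (f : ℕ → E), (∀ k, f k ∈ X k) ∧ (∀ k, n ≤ k → f k = 0) ∧
      ‖(∑ j ∈ Finset.range n, f j) - x‖ ≤ α * ‖x‖ ∧
      ∀ j, ‖∑ i ∈ Finset.range j, f i‖ ≤ B * ‖x‖ + δ := by
  have hpos : 0 < B * ‖x‖ + δ := by positivity
  have hlt : Theta X x (α * ‖x‖) < ENNReal.ofReal (B * ‖x‖ + δ) :=
    lt_of_le_of_lt (h2 x) ((ENNReal.ofReal_lt_ofReal_iff hpos).mpr (by linarith))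
  rw [Theta, iInf_lt_iff] at hlt
  obtain ⟨p, hp⟩ := hlt
  refine ⟨p.1.1, fun k => if k < p.1.1 then p.1.2 k else 0, ?_, ?_, ?_, ?_⟩
  · intro k
    dsimp only
    split
    · exact p.2.1 _ ‹_›
    · exact Submodule.zero_mem _
  · intro k hk
    dsimp only
    rw [if_neg (by omega)]
  · rw [pad_sum, min_self]; exact p.2.2
  · intro j
    rw [pad_sum]
    rcases Nat.eq_zero_or_pos (min j p.1.1) with h | h
    · simp [h, hpos.le]
    · obtain ⟨m, hm⟩ : ∃ m, min j p.1.1 = m + 1 := ⟨min j p.1.1 - 1, by omega⟩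
      rw [hm]
      have h1 : ENNReal.ofReal ‖∑ i ∈ Finset.range (m + 1), p.1.2 i‖
          < ENNReal.ofReal (B * ‖x‖ + δ) := lt_of_le_of_lt (le_thetaP (by omega)) hp
      exact ((ENNReal.ofReal_lt_ofReal_iff hpos).mp h1).le

set_option maxHeartbeats 1000000 in
lemma two_to_one {X : ℕ → Submodule ℝ E} [CompleteSpace E] (hX : ∀ k, IsClosed (X k : Set E))
    {α B : ℝ} (hα : α ∈ Set.Ioo (0:ℝ) 1) (hB : 0 < B)
    (h2 : ∀ x : E, Theta X x (α * ‖x‖) ≤ ENNReal.ofReal (B * ‖x‖)) : IsRSS X := by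
  intro x
  have step := fun (z : E) (m : ℕ) => rss_step hB h2 z (pow_pos hα.1 m)
  choose nn ff hmem hzero happ hbd using step
  let r : ℕ → E := fun m =>
    Nat.rec x (fun m rm => rm - ∑ j ∈ Finset.range (nn rm m), ff rm m j) m
  have hr0 : r 0 = x := rfl
  have hrS : ∀ m, r (m+1) = r m - ∑ j ∈ Finset.range (nn (r m) m), ff (r m) m j := fun m => rfl
  set g : ℕ → ℕ → E := fun m => ff (r m) m with hg
  set N : ℕ → ℕ := fun m => nn (r m) m with hNdef
  have hrbound : ∀ m, ‖r m‖ ≤ α ^ m * ‖x‖ := by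
    intro m
    induction m with
    | zero => simp [hr0]
    | succ m ih =>
      have h1 : ‖r (m+1)‖ ≤ α * ‖r m‖ := by
        rw [hrS, norm_sub_rev]
        exact happ (r m) m
      calc ‖r (m+1)‖ ≤ α * ‖r m‖ := h1
        _ ≤ α * (α ^ m * ‖x‖) := by
            exact mul_le_mul_of_nonneg_left ih hα.1.le
        _ = α ^ (m+1) * ‖x‖ := by ring
  set C := B * ‖x‖ + 1 with hC
  have hC0 : 0 < C := by positivity
  have hgbd : ∀ m j, ‖∑ i ∈ Finset.range j, g m i‖ ≤ C * α ^ m := by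
    intro m j
    calc ‖∑ i ∈ Finset.range j, g m i‖ ≤ B * ‖r m‖ + α ^ m := hbd (r m) m j
      _ ≤ B * (α ^ m * ‖x‖) + α ^ m := by
          have := mul_le_mul_of_nonneg_left (hrbound m) hB.le
          linarith
      _ = C * α ^ m := by rw [hC]; ring
  have hgk : ∀ m k, ‖g m k‖ ≤ 2 * C * α ^ m := by
    intro m k
    have h1 : g m k = (∑ i ∈ Finset.range (k+1), g m i) - ∑ i ∈ Finset.range k, g m i := by
      rw [Finset.sum_range_succ]; abel
    rw [h1]
    calc ‖(∑ i ∈ Finset.range (k+1), g m i) - ∑ i ∈ Finset.range k, g m i‖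
        ≤ ‖∑ i ∈ Finset.range (k+1), g m i‖ + ‖∑ i ∈ Finset.range k, g m i‖ := norm_sub_le _ _
      _ ≤ C * α ^ m + C * α ^ m := add_le_add (hgbd m (k+1)) (hgbd m k)
      _ = 2 * C * α ^ m := by ring
  have hαsum : Summable (fun m => α ^ m) := summable_geometric_of_lt_one hα.1.le hα.2
  have hsummand : ∀ k, Summable (fun m => g m k) := fun k =>
    Summable.of_norm_bounded (hαsum.mul_left (2*C)) (fun m => hgk m k)
  set y : ℕ → E := fun k => ∑' m, g m k with hy
  have hymem : ∀ k, y k ∈ X k := by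
    intro k
    refine (hX k).mem_of_tendsto ((hsummand k).hasSum.tendsto_sum_nat)
      (Filter.Eventually.of_forall fun M => ?_)
    exact Submodule.sum_mem _ fun m _ => hmem (r m) m k
  refine ⟨y, hymem, ?_⟩
  have hS : ∀ n, Summable (fun m => ∑ k ∈ Finset.range n, g m k) := fun n =>
    Summable.of_norm_bounded (hαsum.mul_left C) (fun m => hgbd m n)
  set s : ℕ → E := fun m => ∑ k ∈ Finset.range (N m), g m k with hs
  have hs_sum : Summable s := Summable.of_norm_bounded (hαsum.mul_left C) (fun m => hgbd m (N m))
  have htel : ∀ M, ∑ m ∈ Finset.range M, s m = x - r M := by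
    intro M
    induction M with
    | zero => simp [hr0]
    | succ M ih =>
      rw [Finset.sum_range_succ, ih, hrS]
      simp only [hs]
      abel
  have hrlim : Tendsto r atTop (nhds (0:E)) := by
    apply squeeze_zero_norm hrbound
    have := (tendsto_pow_atTop_nhds_zero_of_lt_one hα.1.le hα.2).mul_const ‖x‖
    simpa using this
  have hpartial : Tendsto (fun M => ∑ m ∈ Finset.range M, s m) atTop (nhds x) := by
    simp only [htel]
    have := Tendsto.sub (tendsto_const_nhds : Tendsto (fun _ : ℕ => x) atTop (nhds x)) hrlim
    simpa using this
  have htsum_s : ∑' m, s m = x :=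
    tendsto_nhds_unique hs_sum.hasSum.tendsto_sum_nat hpartial
  have hSn : ∀ n, ∑ k ∈ Finset.range n, y k = ∑' m, (∑ k ∈ Finset.range n, g m k) :=
    fun n => (Summable.tsum_finsetSum (f := fun k m => g m k) fun k _ => hsummand k).symm
  have hzero' : ∀ m n, N m ≤ n → (∑ k ∈ Finset.range n, g m k) - s m = 0 := by
    intro m n h
    have : ∑ k ∈ Finset.range n, g m k = ∑ k ∈ Finset.range (N m), g m k := by
      symm
      apply Finset.sum_subset (Finset.range_subset_range.mpr h)
      intro k _ hk
      rw [Finset.mem_range, not_lt] at hk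
      exact hzero (r m) m k hk
    rw [this, hs]; simp
  have hdbd : ∀ m n, ‖(∑ k ∈ Finset.range n, g m k) - s m‖ ≤ 2 * C * α ^ m := by
    intro m n
    calc ‖(∑ k ∈ Finset.range n, g m k) - s m‖
        ≤ ‖∑ k ∈ Finset.range n, g m k‖ + ‖s m‖ := norm_sub_le _ _
      _ ≤ C * α ^ m + C * α ^ m := add_le_add (hgbd m n) (hgbd m (N m))
      _ = 2 * C * α ^ m := by ring
  have hdsum : ∀ n, Summable (fun m => ‖(∑ k ∈ Finset.range n, g m k) - s m‖) := fun n =>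
    Summable.of_nonneg_of_le (fun m => norm_nonneg _) (fun m => hdbd m n) (hαsum.mul_left (2*C))
  rw [NormedAddCommGroup.tendsto_atTop]
  intro ε hε
  have htail : Tendsto (fun M => ∑' m, 2 * C * α ^ (m + M)) atTop (nhds 0) :=
    tendsto_sum_nat_add (f := fun m => 2 * C * α ^ m)
  obtain ⟨M, hM⟩ := (htail.eventually (eventually_lt_nhds hε)).exists
  set n₀ := (Finset.range M).sup N with hn0
  refine ⟨n₀, fun n hn => ?_⟩
  have hEq : (∑ k ∈ Finset.range n, y k) - x = ∑' m, ((∑ k ∈ Finset.range n, g m k) - s m) := by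
    rw [hSn, ← htsum_s, Summable.tsum_sub (hS n) hs_sum]
  rw [hEq]
  calc ‖∑' m, ((∑ k ∈ Finset.range n, g m k) - s m)‖
      ≤ ∑' m, ‖(∑ k ∈ Finset.range n, g m k) - s m‖ := norm_tsum_le_tsum_norm (hdsum n)
    _ = (∑ m ∈ Finset.range M, ‖(∑ k ∈ Finset.range n, g m k) - s m‖) +
        ∑' m, ‖(∑ k ∈ Finset.range n, g (m + M) k) - s (m + M)‖ :=
        (Summable.sum_add_tsum_nat_add M (hdsum n)).symm
    _ = ∑' m, ‖(∑ k ∈ Finset.range n, g (m + M) k) - s (m + M)‖ := by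
        rw [Finset.sum_eq_zero, zero_add]
        intro m hm
        rw [hzero' m n (le_trans (Finset.le_sup hm) hn), norm_zero]
    _ ≤ ∑' m, 2 * C * α ^ (m + M) := by
        have hs1 : Summable (fun m => ‖(∑ k ∈ Finset.range n, g (m + M) k) - s (m + M)‖) :=
          (summable_nat_add_iff (f := fun m => ‖(∑ k ∈ Finset.range n, g m k) - s m‖) M).mpr
            (hdsum n)
        have hs2 : Summable (fun m => 2 * C * α ^ (m + M)) :=
          (summable_nat_add_iff (f := fun m => 2 * C * α ^ m) M).mpr (hαsum.mul_left (2*C))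
        exact Summable.tsum_le_tsum (fun m => hdbd (m + M) n) hs1 hs2
    _ < ε := hM

/-- In a Banach space, the following are equivalent: (1) `S` is a representing system of
subspaces; (2) `Θ_S(x, α‖x‖) ≤ B‖x‖` for some `α ∈ (0,1)`, `B > 0` and all `x`;
(3) `Θ*_S(x) < ∞` for all `x`; (4) `sup_{‖x‖ ≤ 1} Θ*_S(x) < ∞`. -/
theorem rss_tfae [CompleteSpace E] (X : ℕ → Submodule ℝ E)
    (hX : ∀ k, IsClosed (X k : Set E)) :
    [IsRSS X,
     ∃ α B : ℝ, α ∈ Set.Ioo (0:ℝ) 1 ∧ 0 < B ∧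
       ∀ x : E, Theta X x (α * ‖x‖) ≤ ENNReal.ofReal (B * ‖x‖),
     ∀ x : E, ThetaStar X x ≠ ⊤,
     (⨆ x : {x : E // ‖x‖ ≤ 1}, ThetaStar X x) ≠ ⊤].TFAE := by
  tfae_have 1 → 3 := fun h1 x => one_to_three h1 x
  tfae_have 3 → 4 := three_to_four
  tfae_have 4 → 2 := four_to_two
  tfae_have 2 → 1 := fun ⟨α, B, hα, hB, h2⟩ => two_to_one hX hα hB h2
  tfae_finish
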